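/- Let a ∈ {0,1}^ℕ start with digit 0, let b ∈ {0,1}^ℕ start with digit 1, and let q₀,q₁ > 1. If max π_{q₀,q₁}([0]_{a,b}) < min π_{q₀,q₁}([1]_{a,b}), then dim_H π_{q₀,q₁}(Ω_{a,b}) = s, where s is the unique s ≥ 0 satisfying lim_{n→∞} (1/n) log Σ_{i₁⋯iₙ ∈ L_{a,b,n}} (q_{i₁}⋯q_{iₙ})^{−s} = 0. In particular, if h(Ω_{a,b}) = 0 then dim_H π_{q₀,q₁}(Ω_{a,b}) = 0. -/

import Mathlib

open Filter Topology MeasureTheory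
open scoped ENNReal NNReal

noncomputable def qb (q0 q1 : ℝ) (d : Bool) : ℝ := if d then q1 else q0

noncomputable def piE (q0 q1 : ℝ) (i : ℕ → Bool) : ℝ :=
  ∑' k : ℕ, (if i k then (1 : ℝ) else 0) / ∏ j ∈ Finset.range (k + 1), qb q0 q1 (i j)

def lexLt (u v : ℕ → Bool) : Prop := ∃ n : ℕ, (∀ m, m < n → u m = v m) ∧ u n < v n

def lexLe (u v : ℕ → Bool) : Prop := lexLt u v ∨ u = v

def shiftTail (i : ℕ → Bool) (n : ℕ) : ℕ → Bool := fun k => i (n + k)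

def Omega (a b : ℕ → Bool) : Set (ℕ → Bool) :=
  {i | ∀ n : ℕ, ¬ (lexLt a (shiftTail i n) ∧ lexLt (shiftTail i n) b)}

def memW (a b : ℕ → Bool) : Prop :=
  a 0 = false ∧ b 0 = true ∧ a ∈ Omega a b ∧ b ∈ Omega a b

noncomputable def Lwords (a b : ℕ → Bool) (n : ℕ) : Finset (Fin n → Bool) :=
  Set.Finite.toFinset
    (Set.toFinite {w : Fin n → Bool | ∃ i ∈ Omega a b, ∀ k : Fin n, i k.1 = w k})

noncomputable def entropy (a b : ℕ → Bool) : ℝ :=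
  Filter.limsup (fun n : ℕ => Real.log ((Lwords a b n).card) / n) Filter.atTop

def cyl (a b : ℕ → Bool) (d : Bool) : Set (ℕ → Bool) := {i | i ∈ Omega a b ∧ i 0 = d}

namespace S11


variable {a b : ℕ → Bool} {q0 q1 : ℝ}

/-! ### Basic Omega lemmas -/

lemma shiftTail_shiftTail (i : ℕ → Bool) (m n : ℕ) :
    shiftTail (shiftTail i m) n = shiftTail i (m + n) := by
  funext k; simp [shiftTail, Nat.add_assoc]

lemma Omega.shift {i : ℕ → Bool} (h : i ∈ Omega a b) (n : ℕ) : shiftTail i n ∈ Omega a b := by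
  intro m hm
  rw [shiftTail_shiftTail] at hm
  exact h (n + m) hm

lemma zero_mem_Omega : (fun _ => false) ∈ Omega a b := by
  intro n hn
  obtain ⟨k, -, hk⟩ := hn.1
  have : shiftTail (fun _ => false) n k = false := rfl
  rw [this] at hk
  exact absurd hk (by simp)

lemma one_mem_Omega : (fun _ => true) ∈ Omega a b := by
  intro n hn
  obtain ⟨k, -, hk⟩ := hn.2
  have : shiftTail (fun _ => true) n k = true := rfl
  rw [this] at hk
  exact absurd hk (by simp)

lemma Omega_nonempty : (Omega a b).Nonempty := ⟨_, zero_mem_Omega⟩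

/-- prefix of a sequence -/
def pre (i : ℕ → Bool) (n : ℕ) : Fin n → Bool := fun k => i k.1

lemma mem_Lwords {n : ℕ} {w : Fin n → Bool} :
    w ∈ Lwords a b n ↔ ∃ i ∈ Omega a b, pre i n = w := by
  simp only [Lwords, Set.Finite.mem_toFinset, Set.mem_setOf_eq]
  constructor
  · rintro ⟨i, hi, h⟩; exact ⟨i, hi, funext fun k => h k⟩
  · rintro ⟨i, hi, h⟩; exact ⟨i, hi, fun k => congrFun h k⟩

lemma pre_mem_Lwords {i : ℕ → Bool} (h : i ∈ Omega a b) (n : ℕ) : pre i n ∈ Lwords a b n :=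
  mem_Lwords.2 ⟨i, h, rfl⟩

lemma Lwords_nonempty (a b : ℕ → Bool) (n : ℕ) : (Lwords a b n).Nonempty :=
  ⟨_, pre_mem_Lwords zero_mem_Omega n⟩


variable {q0 q1 : ℝ}

/-- a single term of the series defining `piE` -/
noncomputable def term (q0 q1 : ℝ) (i : ℕ → Bool) (k : ℕ) : ℝ :=
  (if i k then (1 : ℝ) else 0) / ∏ j ∈ Finset.range (k + 1), qb q0 q1 (i j)

lemma piE_eq_tsum (i : ℕ → Bool) : piE q0 q1 i = ∑' k, term q0 q1 i k := rfl

/-- partial products along a sequence -/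
noncomputable def pp (q0 q1 : ℝ) (i : ℕ → Bool) (n : ℕ) : ℝ :=
  ∏ j ∈ Finset.range n, qb q0 q1 (i j)

section bounds
variable (hq0 : 1 < q0) (hq1 : 1 < q1)
include hq0 hq1

lemma one_lt_qb (d : Bool) : 1 < qb q0 q1 d := by cases d <;> simpa [qb]

lemma qb_pos (d : Bool) : 0 < qb q0 q1 d := lt_trans one_pos (one_lt_qb hq0 hq1 d)

lemma min_le_qb (d : Bool) : min q0 q1 ≤ qb q0 q1 d := by
  cases d <;> simp [qb, min_le_left, min_le_right]

lemma qb_le_max (d : Bool) : qb q0 q1 d ≤ max q0 q1 := by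
  cases d <;> simp [qb, le_max_left, le_max_right]

lemma one_lt_min : (1:ℝ) < min q0 q1 := lt_min hq0 hq1

lemma pp_pos (i : ℕ → Bool) (n : ℕ) : 0 < pp q0 q1 i n :=
  Finset.prod_pos fun j _ => qb_pos hq0 hq1 _

lemma min_pow_le_pp (i : ℕ → Bool) (n : ℕ) : (min q0 q1) ^ n ≤ pp q0 q1 i n := by
  have h : (min q0 q1) ^ n = ∏ _j ∈ Finset.range n, min q0 q1 := by simp
  rw [h]
  exact Finset.prod_le_prod (fun j _ => le_of_lt (lt_trans one_pos (one_lt_min hq0 hq1)))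
    (fun j _ => min_le_qb hq0 hq1 _)

lemma one_le_pp (i : ℕ → Bool) (n : ℕ) : 1 ≤ pp q0 q1 i n :=
  le_trans (one_le_pow₀ (one_lt_min hq0 hq1).le) (min_pow_le_pp hq0 hq1 i n)

lemma pp_le_max_pow (i : ℕ → Bool) (n : ℕ) : pp q0 q1 i n ≤ (max q0 q1) ^ n := by
  have h : (max q0 q1) ^ n = ∏ _j ∈ Finset.range n, max q0 q1 := by simp
  rw [h]
  exact Finset.prod_le_prod (fun j _ => (qb_pos hq0 hq1 _).le) (fun j _ => qb_le_max hq0 hq1 _)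

lemma term_nonneg (i : ℕ → Bool) (k : ℕ) : 0 ≤ term q0 q1 i k := by
  apply div_nonneg
  · split <;> norm_num
  · exact (pp_pos hq0 hq1 i (k+1)).le

lemma term_le (i : ℕ → Bool) (k : ℕ) :
    term q0 q1 i k ≤ (min q0 q1)⁻¹ ^ (k + 1) := by
  have hm := one_lt_min hq0 hq1
  have hmp : (0:ℝ) < min q0 q1 := lt_trans one_pos hm
  have h0 : (0:ℝ) < (min q0 q1) ^ (k+1) := pow_pos hmp _
  have h1 : term q0 q1 i k ≤ 1 / pp q0 q1 i (k+1) := by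
    show _ / pp q0 q1 i (k+1) ≤ _
    rw [div_le_div_iff_of_pos_right (pp_pos hq0 hq1 i (k+1))]
    split <;> norm_num
  have h2 : 1 / pp q0 q1 i (k+1) ≤ 1 / (min q0 q1) ^ (k+1) :=
    one_div_le_one_div_of_le h0 (min_pow_le_pp hq0 hq1 i (k+1))
  calc term q0 q1 i k ≤ 1 / (min q0 q1) ^ (k+1) := le_trans h1 h2
    _ = (min q0 q1)⁻¹ ^ (k + 1) := by rw [one_div, inv_pow]

lemma inv_min_lt_one : (min q0 q1)⁻¹ < 1 :=
  inv_lt_one_of_one_lt₀ (one_lt_min hq0 hq1)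

lemma inv_min_nonneg : 0 ≤ (min q0 q1)⁻¹ :=
  inv_nonneg.2 (le_of_lt (lt_trans one_pos (one_lt_min hq0 hq1)))

lemma summable_term (i : ℕ → Bool) : Summable (term q0 q1 i) := by
  apply Summable.of_nonneg_of_le (term_nonneg hq0 hq1 i) (term_le hq0 hq1 i)
  have := ((summable_geometric_of_lt_one (inv_min_nonneg hq0 hq1)
    (inv_min_lt_one hq0 hq1)).mul_right ((min q0 q1)⁻¹))
  simpa [pow_succ] using this

lemma piE_nonneg (i : ℕ → Bool) : 0 ≤ piE q0 q1 i :=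
  tsum_nonneg (term_nonneg hq0 hq1 i)

lemma piE_le (i : ℕ → Bool) : piE q0 q1 i ≤ (min q0 q1 - 1)⁻¹ := by
  have hm := one_lt_min hq0 hq1
  have hmp : (0:ℝ) < min q0 q1 := lt_trans one_pos hm
  have hsum : Summable (fun k : ℕ => (min q0 q1)⁻¹ ^ (k+1)) := by
    have := ((summable_geometric_of_lt_one (inv_min_nonneg hq0 hq1)
      (inv_min_lt_one hq0 hq1)).mul_right ((min q0 q1)⁻¹))
    simpa [pow_succ] using this
  have h1 : piE q0 q1 i ≤ ∑' k : ℕ, (min q0 q1)⁻¹ ^ (k+1) :=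
    Summable.tsum_le_tsum (term_le hq0 hq1 i) (summable_term hq0 hq1 i) hsum
  have h2 : ∑' k : ℕ, (min q0 q1)⁻¹ ^ (k+1) = (min q0 q1 - 1)⁻¹ := by
    have : (fun k : ℕ => (min q0 q1)⁻¹ ^ (k+1)) = fun k : ℕ => (min q0 q1)⁻¹ ^ k * (min q0 q1)⁻¹ := by
      funext k; rw [pow_succ]
    rw [this, tsum_mul_right, tsum_geometric_of_lt_one (inv_min_nonneg hq0 hq1)
      (inv_min_lt_one hq0 hq1)]
    have hne : q0 ⊓ q1 ≠ 0 := ne_of_gt hmp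
    have hne1 : q0 ⊓ q1 - 1 ≠ 0 := sub_ne_zero.2 (ne_of_gt hm)
    have hne2 : 1 - (q0 ⊓ q1)⁻¹ ≠ 0 := by
      have : (q0 ⊓ q1)⁻¹ < 1 := inv_min_lt_one hq0 hq1
      intro h; rw [sub_eq_zero] at h; exact (ne_of_lt this) h.symm
    field_simp
  rw [← h2]; exact h1

end bounds

variable {q0 q1 : ℝ}
lemma term_shift (hq0 : 1 < q0) (hq1 : 1 < q1) (i : ℕ → Bool) (n k : ℕ) :
    term q0 q1 i (k + n) = (pp q0 q1 i n)⁻¹ * term q0 q1 (shiftTail i n) k := by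
  have hpp := (pp_pos hq0 hq1 i n).ne'
  unfold term
  rw [show k + n + 1 = n + (k + 1) by omega, Finset.prod_range_add]
  have e1 : i (k + n) = shiftTail i n k := by simp [shiftTail, Nat.add_comm]
  have e2 : ∀ x : ℕ, i (n + x) = shiftTail i n x := fun x => rfl
  simp only [e1, e2]
  rw [div_mul_eq_div_div_swap, div_eq_inv_mul]
  rfl

lemma piE_decomp (hq0 : 1 < q0) (hq1 : 1 < q1) (i : ℕ → Bool) (n : ℕ) :
    piE q0 q1 i = (∑ k ∈ Finset.range n, term q0 q1 i k)
      + (pp q0 q1 i n)⁻¹ * piE q0 q1 (shiftTail i n) := by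
  have hs := summable_term hq0 hq1 i
  rw [piE_eq_tsum, ← Summable.sum_add_tsum_nat_add n hs]
  congr 1
  rw [piE_eq_tsum, ← tsum_mul_left]
  exact tsum_congr fun k => term_shift hq0 hq1 i n k

lemma pp_congr {i j : ℕ → Bool} {n : ℕ} (h : ∀ m, m < n → i m = j m) :
    pp q0 q1 i n = pp q0 q1 j n :=
  Finset.prod_congr rfl fun m hm => by rw [h m (Finset.mem_range.1 hm)]

lemma piE_sub_of_agree (hq0 : 1 < q0) (hq1 : 1 < q1) {i j : ℕ → Bool} {n : ℕ}
    (h : ∀ m, m < n → i m = j m) :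
    piE q0 q1 i - piE q0 q1 j
      = (pp q0 q1 i n)⁻¹ * (piE q0 q1 (shiftTail i n) - piE q0 q1 (shiftTail j n)) := by
  have hterm : ∀ k ∈ Finset.range n, term q0 q1 i k = term q0 q1 j k := by
    intro k hk
    have hk' := Finset.mem_range.1 hk
    unfold term
    rw [h k hk', Finset.prod_congr rfl (fun m hm => by
      rw [h m (lt_of_lt_of_le (Finset.mem_range.1 hm) hk')])]
  rw [piE_decomp hq0 hq1 i n, piE_decomp hq0 hq1 j n, Finset.sum_congr rfl hterm,
    pp_congr h]
  ring

lemma abs_piE_sub_le (hq0 : 1 < q0) (hq1 : 1 < q1) {i j : ℕ → Bool} {n : ℕ}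
    (h : ∀ m, m < n → i m = j m) :
    |piE q0 q1 i - piE q0 q1 j| ≤ (pp q0 q1 i n)⁻¹ * (min q0 q1 - 1)⁻¹ := by
  rw [piE_sub_of_agree hq0 hq1 h, abs_mul,
    abs_of_pos (inv_pos.2 (pp_pos hq0 hq1 i n))]
  apply mul_le_mul_of_nonneg_left _ (inv_pos.2 (pp_pos hq0 hq1 i n)).le
  rw [abs_sub_le_iff]
  constructor
  · linarith [piE_le hq0 hq1 (shiftTail i n), piE_nonneg hq0 hq1 (shiftTail j n)]
  · linarith [piE_le hq0 hq1 (shiftTail j n), piE_nonneg hq0 hq1 (shiftTail i n)]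


variable {a b : ℕ → Bool} {q0 q1 : ℝ}
/-! ### weights of words and the partition sums -/

noncomputable def Pw (q0 q1 : ℝ) {n : ℕ} (w : Fin n → Bool) : ℝ := ∏ j, qb q0 q1 (w j)

noncomputable def SS (a b : ℕ → Bool) (q0 q1 : ℝ) (s : ℝ) (n : ℕ) : ℝ :=
  ∑ w ∈ Lwords a b n, Pw q0 q1 w ^ (-s)

section basic
variable (hq0 : 1 < q0) (hq1 : 1 < q1)
include hq0 hq1

lemma Pw_pos {n : ℕ} (w : Fin n → Bool) : 0 < Pw q0 q1 w :=
  Finset.prod_pos fun j _ => qb_pos hq0 hq1 _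

lemma Pw_pre (i : ℕ → Bool) (n : ℕ) : Pw q0 q1 (pre i n) = pp q0 q1 i n := by
  rw [Pw, pp, ← Fin.prod_univ_eq_prod_range (fun j => qb q0 q1 (i j)) n]; rfl

lemma min_pow_le_Pw {n : ℕ} (w : Fin n → Bool) : (min q0 q1) ^ n ≤ Pw q0 q1 w := by
  have h : ∀ i : ℕ → Bool, pre i n = w → (min q0 q1) ^ n ≤ Pw q0 q1 w := by
    intro i hi; rw [← hi, Pw_pre hq0 hq1]; exact min_pow_le_pp hq0 hq1 i n
  exact h (fun k => if hk : k < n then w ⟨k, hk⟩ else false) (by funext k; simp [pre, k.2])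

lemma Pw_le_max_pow {n : ℕ} (w : Fin n → Bool) : Pw q0 q1 w ≤ (max q0 q1) ^ n := by
  have h : ∀ i : ℕ → Bool, pre i n = w → Pw q0 q1 w ≤ (max q0 q1) ^ n := by
    intro i hi; rw [← hi, Pw_pre hq0 hq1]; exact pp_le_max_pow hq0 hq1 i n
  exact h (fun k => if hk : k < n then w ⟨k, hk⟩ else false) (by funext k; simp [pre, k.2])

lemma SS_pos (s : ℝ) (n : ℕ) : 0 < SS a b q0 q1 s n :=
  Finset.sum_pos (fun w _ => Real.rpow_pos_of_pos (Pw_pos hq0 hq1 w) _)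
    (Lwords_nonempty a b n)

lemma SS_zero_eq_card (n : ℕ) : SS a b q0 q1 0 n = (Lwords a b n).card := by
  rw [SS]
  rw [Finset.sum_congr rfl (fun w _ => by rw [neg_zero, Real.rpow_zero])]
  simp

lemma SS_zero' : SS a b q0 q1 s 0 = 1 := by
  rw [SS]
  have : (Lwords a b 0).card = 1 := by
    refine le_antisymm ?_ (Finset.card_pos.2 (Lwords_nonempty a b 0))
    exact le_trans (Finset.card_le_univ _) (by simp)
  rw [Finset.card_eq_one] at this
  obtain ⟨w, hw⟩ := this
  rw [hw, Finset.sum_singleton, Pw, Finset.univ_eq_empty, Finset.prod_empty, Real.one_rpow]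

end basic

/-! ### splitting of words -/

def wsplit1 {m n : ℕ} (w : Fin (m + n) → Bool) : Fin m → Bool := fun k => w (Fin.castAdd n k)
def wsplit2 {m n : ℕ} (w : Fin (m + n) → Bool) : Fin n → Bool := fun k => w (Fin.natAdd m k)

lemma wsplit_inj {m n : ℕ} {w w' : Fin (m + n) → Bool}
    (h1 : wsplit1 w = wsplit1 w') (h2 : wsplit2 w = wsplit2 w') : w = w' := by
  funext k
  by_cases hk : k.1 < m
  · have := congrFun h1 ⟨k.1, hk⟩
    simpa [wsplit1, Fin.castAdd, Fin.ext_iff] using this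
  · have hk2 : k.1 - m < n := by omega
    have := congrFun h2 ⟨k.1 - m, hk2⟩
    simp only [wsplit2, Fin.natAdd, Fin.ext_iff] at this
    have e : m + (k.1 - m) = k.1 := by omega
    rw [show (⟨m + (k.1 - m), by omega⟩ : Fin (m+n)) = k from Fin.ext e] at this
    exact this

lemma Pw_split (q0 q1 : ℝ) {m n : ℕ} (w : Fin (m + n) → Bool) :
    Pw q0 q1 w = Pw q0 q1 (wsplit1 w) * Pw q0 q1 (wsplit2 w) := by
  rw [Pw, Fin.prod_univ_add]; rfl

lemma wsplit1_mem {m n : ℕ} {w : Fin (m + n) → Bool} (h : w ∈ Lwords a b (m + n)) :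
    wsplit1 w ∈ Lwords a b m := by
  obtain ⟨i, hi, hw⟩ := mem_Lwords.1 h
  refine mem_Lwords.2 ⟨i, hi, ?_⟩
  funext k
  have := congrFun hw (Fin.castAdd n k)
  simpa [pre, wsplit1] using this

lemma wsplit2_mem {m n : ℕ} {w : Fin (m + n) → Bool} (h : w ∈ Lwords a b (m + n)) :
    wsplit2 w ∈ Lwords a b n := by
  obtain ⟨i, hi, hw⟩ := mem_Lwords.1 h
  refine mem_Lwords.2 ⟨shiftTail i m, Omega.shift hi m, ?_⟩
  funext k
  have := congrFun hw (Fin.natAdd m k)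
  simpa [pre, wsplit2, shiftTail] using this

lemma SS_submul (hq0 : 1 < q0) (hq1 : 1 < q1) (s : ℝ) (m n : ℕ) :
    SS a b q0 q1 s (m + n) ≤ SS a b q0 q1 s m * SS a b q0 q1 s n := by
  classical
  have key : SS a b q0 q1 s (m + n)
      = ∑ p ∈ (Lwords a b (m + n)).image (fun w => (wsplit1 w, wsplit2 w)),
          Pw q0 q1 p.1 ^ (-s) * Pw q0 q1 p.2 ^ (-s) := by
    rw [Finset.sum_image (fun w hw w' hw' hp =>
      wsplit_inj (congrArg Prod.fst hp) (congrArg Prod.snd hp))]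
    exact Finset.sum_congr rfl fun w _ => by
      rw [Pw_split, Real.mul_rpow (Pw_pos hq0 hq1 _).le (Pw_pos hq0 hq1 _).le]
  rw [key]
  have hprod : SS a b q0 q1 s m * SS a b q0 q1 s n
      = ∑ p ∈ (Lwords a b m) ×ˢ (Lwords a b n), Pw q0 q1 p.1 ^ (-s) * Pw q0 q1 p.2 ^ (-s) := by
    rw [Finset.sum_product]
    rw [SS, SS, Finset.sum_mul]
    exact Finset.sum_congr rfl fun w _ => by rw [Finset.mul_sum]
  rw [hprod]
  apply Finset.sum_le_sum_of_subset_of_nonneg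
  · intro p hp
    obtain ⟨w, hw, hwp⟩ := Finset.mem_image.1 hp
    rw [← hwp]
    exact Finset.mem_product.2 ⟨wsplit1_mem hw, wsplit2_mem hw⟩
  · intro p _ _
    exact mul_nonneg (Real.rpow_nonneg (Pw_pos hq0 hq1 _).le _)
      (Real.rpow_nonneg (Pw_pos hq0 hq1 _).le _)


variable {a b : ℕ → Bool} {q0 q1 : ℝ}
/-! ### the pressure function -/

noncomputable def logS (a b : ℕ → Bool) (q0 q1 s : ℝ) (n : ℕ) : ℝ :=
  Real.log (SS a b q0 q1 s n)

noncomputable def PP (a b : ℕ → Bool) (q0 q1 s : ℝ) : ℝ :=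
  sInf ((fun n : ℕ => logS a b q0 q1 s n / n) '' Set.Ici 1)

section pressure
variable (hq0 : 1 < q0) (hq1 : 1 < q1)
include hq0 hq1

lemma logS_subadd (s : ℝ) : Subadditive (logS a b q0 q1 s) := by
  intro m n
  rw [logS, logS, logS, ← Real.log_mul (SS_pos hq0 hq1 s m).ne' (SS_pos hq0 hq1 s n).ne']
  exact Real.log_le_log (SS_pos hq0 hq1 s (m + n)) (SS_submul hq0 hq1 s m n)

lemma one_lt_max : (1:ℝ) < max q0 q1 := lt_of_lt_of_le hq0 (le_max_left _ _)

lemma logS_ge (s : ℝ) (hs : 0 ≤ s) (n : ℕ) :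
    -(s * Real.log (max q0 q1)) * n ≤ logS a b q0 q1 s n := by
  obtain ⟨w, hw⟩ := Lwords_nonempty a b n
  have h1 : ((max q0 q1 : ℝ) ^ n) ^ (-s) ≤ Pw q0 q1 w ^ (-s) :=
    Real.rpow_le_rpow_of_nonpos (Pw_pos hq0 hq1 w) (Pw_le_max_pow hq0 hq1 w) (neg_nonpos.2 hs)
  have h2 : Pw q0 q1 w ^ (-s) ≤ SS a b q0 q1 s n :=
    Finset.single_le_sum (fun w _ => Real.rpow_nonneg (Pw_pos hq0 hq1 w).le _) hw
  have h3 : Real.log (((max q0 q1 : ℝ) ^ n) ^ (-s)) ≤ logS a b q0 q1 s n :=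
    Real.log_le_log (Real.rpow_pos_of_pos (pow_pos (lt_trans one_pos (one_lt_max hq0 hq1)) n) _)
      (le_trans h1 h2)
  rw [Real.log_rpow (pow_pos (lt_trans one_pos (one_lt_max hq0 hq1)) n), Real.log_pow] at h3
  calc -(s * Real.log (max q0 q1)) * n = -s * (n * Real.log (max q0 q1)) := by ring
    _ ≤ logS a b q0 q1 s n := h3

lemma logS_div_ge (s : ℝ) (hs : 0 ≤ s) (n : ℕ) :
    -(s * Real.log (max q0 q1)) ≤ logS a b q0 q1 s n / n := by
  rcases Nat.eq_zero_or_pos n with rfl | hn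
  · simp only [Nat.cast_zero, div_zero]
    exact neg_nonpos.2 (mul_nonneg hs (Real.log_nonneg (one_lt_max hq0 hq1).le))
  · rw [le_div_iff₀ (by exact_mod_cast hn : (0:ℝ) < n)]
    exact logS_ge hq0 hq1 s hs n

lemma logS_bddBelow (s : ℝ) (hs : 0 ≤ s) :
    BddBelow (Set.range fun n : ℕ => logS a b q0 q1 s n / n) :=
  ⟨-(s * Real.log (max q0 q1)), by rintro x ⟨n, rfl⟩; exact logS_div_ge hq0 hq1 s hs n⟩

lemma tendsto_logS_div (s : ℝ) (hs : 0 ≤ s) :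
    Tendsto (fun n : ℕ => logS a b q0 q1 s n / n) atTop (𝓝 (PP a b q0 q1 s)) := by
  have h := (logS_subadd hq0 hq1 s (a := a) (b := b)).tendsto_lim (logS_bddBelow hq0 hq1 s hs)
  rw [Subadditive.lim] at h
  exact h

lemma PP_le_div (s : ℝ) (hs : 0 ≤ s) {n : ℕ} (hn : n ≠ 0) :
    PP a b q0 q1 s ≤ logS a b q0 q1 s n / n := by
  have h := Subadditive.lim_le_div (logS_subadd hq0 hq1 s (a := a) (b := b)) (logS_bddBelow hq0 hq1 s hs) hn
  rw [Subadditive.lim] at h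
  exact h

/-- comparison of `SS` at two exponents, upper version -/
lemma SS_le_SS (s t : ℝ) (hst : s ≤ t) (n : ℕ) :
    SS a b q0 q1 t n ≤ SS a b q0 q1 s n * ((min q0 q1) ^ (n:ℝ)) ^ (s - t) := by
  rw [SS, SS, Finset.sum_mul]
  apply Finset.sum_le_sum
  intro w hw
  have h1 : Pw q0 q1 w ^ (-t) = Pw q0 q1 w ^ (-s) * Pw q0 q1 w ^ (s - t) := by
    rw [← Real.rpow_add (Pw_pos hq0 hq1 w)]; ring_nf
  rw [h1]
  apply mul_le_mul_of_nonneg_left _ (Real.rpow_nonneg (Pw_pos hq0 hq1 w).le _)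
  apply Real.rpow_le_rpow_of_nonpos (by positivity) _ (by linarith)
  rw [Real.rpow_natCast]
  exact min_pow_le_Pw hq0 hq1 w

/-- comparison of `SS` at two exponents, lower version -/
lemma SS_ge_SS (s t : ℝ) (hst : s ≤ t) (n : ℕ) :
    SS a b q0 q1 s n * ((max q0 q1) ^ (n:ℝ)) ^ (s - t) ≤ SS a b q0 q1 t n := by
  rw [SS, SS, Finset.sum_mul]
  apply Finset.sum_le_sum
  intro w hw
  have h1 : Pw q0 q1 w ^ (-t) = Pw q0 q1 w ^ (-s) * Pw q0 q1 w ^ (s - t) := by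
    rw [← Real.rpow_add (Pw_pos hq0 hq1 w)]; ring_nf
  rw [h1]
  apply mul_le_mul_of_nonneg_left _ (Real.rpow_nonneg (Pw_pos hq0 hq1 w).le _)
  apply Real.rpow_le_rpow_of_nonpos (Pw_pos hq0 hq1 w) _ (by linarith)
  rw [Real.rpow_natCast]
  exact Pw_le_max_pow hq0 hq1 w

lemma PP_le_PP_sub (s t : ℝ) (hs : 0 ≤ s) (hst : s ≤ t) :
    PP a b q0 q1 t ≤ PP a b q0 q1 s + (s - t) * Real.log (min q0 q1) := by
  have ht : 0 ≤ t := le_trans hs hst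
  have hminpos : (0:ℝ) < min q0 q1 := lt_trans one_pos (one_lt_min hq0 hq1)
  apply le_of_tendsto_of_tendsto (tendsto_logS_div hq0 hq1 t ht)
    ((tendsto_logS_div hq0 hq1 s hs).add_const ((s - t) * Real.log (min q0 q1)))
  filter_upwards [eventually_gt_atTop 0] with n hn
  have hnR : (0:ℝ) < n := by exact_mod_cast hn
  have h1 : logS a b q0 q1 t n ≤ logS a b q0 q1 s n + ((s - t) * Real.log (min q0 q1)) * n := by
    have h2 := SS_le_SS hq0 hq1 s t hst n (a := a) (b := b)
    have h3 := Real.log_le_log (SS_pos hq0 hq1 t n) h2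
    rw [Real.log_mul (SS_pos hq0 hq1 s n).ne' (by positivity),
      Real.log_rpow (by positivity), Real.log_rpow hminpos] at h3
    calc logS a b q0 q1 t n ≤ logS a b q0 q1 s n + (s - t) * ((n:ℝ) * Real.log (min q0 q1)) := h3
      _ = logS a b q0 q1 s n + ((s - t) * Real.log (min q0 q1)) * n := by ring
  calc logS a b q0 q1 t n / n ≤ (logS a b q0 q1 s n + ((s - t) * Real.log (min q0 q1)) * n) / n :=
        div_le_div_of_nonneg_right h1 hnR.le |>.trans_eq rfl
    _ = logS a b q0 q1 s n / n + (s - t) * Real.log (min q0 q1) := by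
        field_simp
  
lemma PP_ge_PP_sub (s t : ℝ) (hs : 0 ≤ s) (hst : s ≤ t) :
    PP a b q0 q1 s + (s - t) * Real.log (max q0 q1) ≤ PP a b q0 q1 t := by
  have ht : 0 ≤ t := le_trans hs hst
  have hmaxpos : (0:ℝ) < max q0 q1 := lt_trans one_pos (one_lt_max hq0 hq1)
  apply le_of_tendsto_of_tendsto
    ((tendsto_logS_div hq0 hq1 s hs).add_const ((s - t) * Real.log (max q0 q1)))
    (tendsto_logS_div hq0 hq1 t ht)
  filter_upwards [eventually_gt_atTop 0] with n hn
  have hnR : (0:ℝ) < n := by exact_mod_cast hn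
  have h1 : logS a b q0 q1 s n + ((s - t) * Real.log (max q0 q1)) * n ≤ logS a b q0 q1 t n := by
    have h2 := SS_ge_SS hq0 hq1 s t hst n (a := a) (b := b)
    have hspos : (0:ℝ) < SS a b q0 q1 s n * ((max q0 q1) ^ (n:ℝ)) ^ (s - t) :=
      mul_pos (SS_pos hq0 hq1 s n) (Real.rpow_pos_of_pos (Real.rpow_pos_of_pos hmaxpos _) _)
    have h3 := Real.log_le_log hspos h2
    rw [Real.log_mul (SS_pos hq0 hq1 s n).ne' (by positivity),
      Real.log_rpow (by positivity), Real.log_rpow hmaxpos] at h3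
    calc logS a b q0 q1 s n + ((s - t) * Real.log (max q0 q1)) * n
        = logS a b q0 q1 s n + (s - t) * ((n:ℝ) * Real.log (max q0 q1)) := by ring
      _ ≤ logS a b q0 q1 t n := h3
  calc logS a b q0 q1 s n / n + (s - t) * Real.log (max q0 q1)
      = (logS a b q0 q1 s n + ((s - t) * Real.log (max q0 q1)) * n) / n := by field_simp
    _ ≤ logS a b q0 q1 t n / n := div_le_div_of_nonneg_right h1 hnR.le

lemma PP_strictAnti {s t : ℝ} (hs : 0 ≤ s) (hst : s < t) :
    PP a b q0 q1 t < PP a b q0 q1 s := by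
  have := PP_le_PP_sub hq0 hq1 s t hs hst.le (a := a) (b := b)
  have hlog : 0 < Real.log (min q0 q1) := Real.log_pos (one_lt_min hq0 hq1)
  nlinarith

lemma PP_zero_nonneg : 0 ≤ PP a b q0 q1 0 := by
  apply ge_of_tendsto (tendsto_logS_div hq0 hq1 0 le_rfl)
  filter_upwards with n
  apply div_nonneg _ (Nat.cast_nonneg n)
  rw [logS, SS_zero_eq_card hq0 hq1]
  apply Real.log_nonneg
  exact_mod_cast Nat.one_le_iff_ne_zero.2 (Finset.card_ne_zero.2 (Lwords_nonempty a b n))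

lemma PP_lipschitz {s t : ℝ} (hs : 0 ≤ s) (hst : s ≤ t) :
    |PP a b q0 q1 t - PP a b q0 q1 s| ≤ Real.log (max q0 q1) * (t - s) := by
  have h1 := PP_le_PP_sub hq0 hq1 s t hs hst (a := a) (b := b)
  have h2 := PP_ge_PP_sub hq0 hq1 s t hs hst (a := a) (b := b)
  have hlogm : 0 ≤ Real.log (min q0 q1) := (Real.log_pos (one_lt_min hq0 hq1)).le
  have hlogM : Real.log (min q0 q1) ≤ Real.log (max q0 q1) :=
    Real.log_le_log (lt_trans one_pos (one_lt_min hq0 hq1)) (min_le_max)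
  rw [abs_le]
  constructor <;> nlinarith

lemma PP_continuousOn (T : ℝ) (hT : 0 ≤ T) :
    ContinuousOn (PP a b q0 q1) (Set.Icc 0 T) := by
  have hM : 0 ≤ Real.log (max q0 q1) := Real.log_nonneg (one_lt_max hq0 hq1).le
  apply LipschitzOnWith.continuousOn (K := Real.toNNReal (Real.log (max q0 q1)))
  intro s hs t ht
  rw [edist_dist, edist_dist]
  rw [← ENNReal.ofReal_coe_nnreal, ← ENNReal.ofReal_mul (by positivity)]
  apply ENNReal.ofReal_le_ofReal
  rw [Real.coe_toNNReal _ hM, Real.dist_eq, Real.dist_eq]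
  rcases le_total t s with h | h
  · have := PP_lipschitz hq0 hq1 ht.1 h (a := a) (b := b)
    rw [abs_sub_comm] at this
    calc |PP a b q0 q1 s - PP a b q0 q1 t| ≤ Real.log (max q0 q1) * (s - t) := by
          rw [abs_sub_comm]; exact this
      _ ≤ Real.log (max q0 q1) * |s - t| := by
          apply mul_le_mul_of_nonneg_left _ hM
          exact le_abs_self _ |>.trans (by rw [abs_sub_comm])
  · have := PP_lipschitz hq0 hq1 hs.1 h (a := a) (b := b)
    calc |PP a b q0 q1 s - PP a b q0 q1 t| = |PP a b q0 q1 t - PP a b q0 q1 s| := abs_sub_comm _ _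
      _ ≤ Real.log (max q0 q1) * (t - s) := this
      _ ≤ Real.log (max q0 q1) * |s - t| := by
          apply mul_le_mul_of_nonneg_left _ hM
          rw [abs_sub_comm]; exact le_abs_self _

/-- Existence of a root of the pressure function. -/
lemma exists_root : ∃ s : ℝ, 0 ≤ s ∧ PP a b q0 q1 s = 0 := by
  have h0 := PP_zero_nonneg hq0 hq1 (a := a) (b := b)
  rcases eq_or_lt_of_le h0 with h | h
  · exact ⟨0, le_rfl, h.symm⟩
  · have hlog : 0 < Real.log (min q0 q1) := Real.log_pos (one_lt_min hq0 hq1)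
    set T : ℝ := PP a b q0 q1 0 / Real.log (min q0 q1) with hTdef
    have hT : 0 ≤ T := div_nonneg h.le hlog.le
    have hPT : PP a b q0 q1 T ≤ 0 := by
      have := PP_le_PP_sub hq0 hq1 0 T le_rfl hT (a := a) (b := b)
      have hTlog : T * Real.log (min q0 q1) = PP a b q0 q1 0 := by
        rw [hTdef, div_mul_cancel₀ _ hlog.ne']
      nlinarith
    have := intermediate_value_Icc' hT (PP_continuousOn hq0 hq1 T hT (a := a) (b := b))
    have hmem : (0:ℝ) ∈ Set.Icc (PP a b q0 q1 T) (PP a b q0 q1 0) := ⟨hPT, h.le⟩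
    obtain ⟨s, hs, hs0⟩ := this hmem
    exact ⟨s, hs.1, hs0⟩

end pressure

variable {a b : ℕ → Bool}
lemma isOpen_eval (m : ℕ) (c : Bool) : IsOpen {i : ℕ → Bool | i m = c} :=
  (continuous_apply (A := fun _ : ℕ => Bool) m).isOpen_preimage ({c} : Set Bool)
    (isOpen_discrete _)

lemma isOpen_agree (v : ℕ → Bool) (n : ℕ) : IsOpen {u : ℕ → Bool | ∀ m, m < n → u m = v m} := by
  have : {u : ℕ → Bool | ∀ m, m < n → u m = v m}
      = ⋂ m ∈ Finset.range n, {u : ℕ → Bool | u m = v m} := by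
    ext u; simp [Finset.mem_range]
  rw [this]
  exact isOpen_biInter_finset fun m _ => isOpen_eval m (v m)

lemma isOpen_lexLt_left (A : ℕ → Bool) : IsOpen {u : ℕ → Bool | lexLt A u} := by
  have : {u : ℕ → Bool | lexLt A u}
      = ⋃ n : ℕ, ({u : ℕ → Bool | ∀ m, m < n → u m = A m} ∩ {u | A n < u n}) := by
    ext u
    simp only [Set.mem_setOf_eq, Set.mem_iUnion, Set.mem_inter_iff, lexLt]
    constructor
    · rintro ⟨n, h1, h2⟩; exact ⟨n, fun m hm => (h1 m hm).symm, h2⟩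
    · rintro ⟨n, h1, h2⟩; exact ⟨n, fun m hm => (h1 m hm).symm, h2⟩
  rw [this]
  apply isOpen_iUnion
  intro n
  apply (isOpen_agree A n).inter
  have : {u : ℕ → Bool | A n < u n} = ⋃ c ∈ {c : Bool | A n < c}, {u : ℕ → Bool | u n = c} := by
    ext u; simp
  rw [this]
  exact isOpen_biUnion fun c _ => isOpen_eval n c

lemma isOpen_lexLt_right (B : ℕ → Bool) : IsOpen {u : ℕ → Bool | lexLt u B} := by
  have : {u : ℕ → Bool | lexLt u B}
      = ⋃ n : ℕ, ({u : ℕ → Bool | ∀ m, m < n → u m = B m} ∩ {u | u n < B n}) := by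
    ext u
    simp only [Set.mem_setOf_eq, Set.mem_iUnion, Set.mem_inter_iff, lexLt]
  rw [this]
  apply isOpen_iUnion
  intro n
  apply (isOpen_agree B n).inter
  have : {u : ℕ → Bool | u n < B n} = ⋃ c ∈ {c : Bool | c < B n}, {u : ℕ → Bool | u n = c} := by
    ext u; simp
  rw [this]
  exact isOpen_biUnion fun c _ => isOpen_eval n c

lemma continuous_shiftTail (n : ℕ) : Continuous (fun i : ℕ → Bool => shiftTail i n) :=
  continuous_pi fun k => continuous_apply (n + k)

lemma isClosed_Omega (a b : ℕ → Bool) : IsClosed (Omega a b) := by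
  have : Omega a b = ⋂ n : ℕ,
      ((fun i : ℕ → Bool => shiftTail i n) ⁻¹'
        ({u : ℕ → Bool | lexLt a u} ∩ {u : ℕ → Bool | lexLt u b}))ᶜ := by
    ext i
    simp only [Omega, Set.mem_setOf_eq, Set.mem_iInter, Set.mem_compl_iff, Set.mem_preimage,
      Set.mem_inter_iff]
  rw [this]
  exact isClosed_iInter fun n =>
    (((isOpen_lexLt_left a).inter (isOpen_lexLt_right b)).preimage
      (continuous_shiftTail n)).isClosed_compl

lemma isCompact_Omega (a b : ℕ → Bool) : IsCompact (Omega a b) :=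
  (isClosed_Omega a b).isCompact

lemma isOpen_preCyl (n : ℕ) (w : Fin n → Bool) : IsOpen {i : ℕ → Bool | pre i n = w} := by
  have : {i : ℕ → Bool | pre i n = w} = ⋂ m ∈ Finset.range n,
      {i : ℕ → Bool | ∀ hm : m < n, i m = w ⟨m, hm⟩} := by
    ext i
    simp only [Set.mem_setOf_eq, Set.mem_iInter, Finset.mem_range, funext_iff, pre]
    constructor
    · intro h m _ hm; exact h ⟨m, hm⟩
    · intro h k; exact h k.1 k.2 k.2
  rw [this]
  apply isOpen_biInter_finset
  intro m hm
  rw [Finset.mem_range] at hm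
  have : {i : ℕ → Bool | ∀ hm : m < n, i m = w ⟨m, hm⟩} = {i : ℕ → Bool | i m = w ⟨m, hm⟩} := by
    ext i; simp only [Set.mem_setOf_eq]; exact ⟨fun h => h hm, fun h _ => h⟩
  rw [this]
  exact isOpen_eval m _


variable {a b : ℕ → Bool} {q0 q1 : ℝ}
lemma pp_add (q0 q1 : ℝ) (i : ℕ → Bool) (m n : ℕ) :
    pp q0 q1 i (m + n) = pp q0 q1 i m * pp q0 q1 (shiftTail i m) n := by
  rw [pp, Finset.prod_range_add]; rfl

section cut
variable (hq0 : 1 < q0) (hq1 : 1 < q1)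
include hq0 hq1

/-- The parsing inequality: if the cylinders of the words `w n`, `n ∈ F`, cover `Ω`,
then the level-`N` partition sum is bounded by the corresponding weighted sums. -/
lemma SS_parse (s : ℝ) (F : Finset ℕ) (k : ℕ → ℕ) (w : ∀ n : ℕ, Fin (k n) → Bool)
    (hcov : ∀ i ∈ Omega a b, ∃ n ∈ F, pre i (k n) = w n)
    (N : ℕ) (hN : ∀ n ∈ F, k n ≤ N) :
    SS a b q0 q1 s N ≤ ∑ n ∈ F, Pw q0 q1 (w n) ^ (-s) * SS a b q0 q1 s (N - k n) := by
  classical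
  -- choose a witness sequence for every word of length N
  have hex : ∀ v : Fin N → Bool, ∃ i, v ∈ Lwords a b N → (i ∈ Omega a b ∧ pre i N = v) := by
    intro v
    by_cases hv : v ∈ Lwords a b N
    · obtain ⟨i, hi, hp⟩ := mem_Lwords.1 hv
      exact ⟨i, fun _ => ⟨hi, hp⟩⟩
    · exact ⟨fun _ => false, fun h => absurd h hv⟩
  choose I hI using hex
  have hexG : ∀ v : Fin N → Bool, ∃ n, v ∈ Lwords a b N →
      (n ∈ F ∧ pre (I v) (k n) = w n) := by
    intro v
    by_cases hv : v ∈ Lwords a b N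
    · obtain ⟨n, hn, hp⟩ := hcov (I v) ((hI v hv).1)
      exact ⟨n, fun _ => ⟨hn, hp⟩⟩
    · exact ⟨0, fun h => absurd h hv⟩
  choose G hG using hexG
  have hmaps : ∀ v ∈ Lwords a b N, G v ∈ F := fun v hv => (hG v hv).1
  rw [SS, ← Finset.sum_fiberwise_of_maps_to hmaps]
  apply Finset.sum_le_sum
  intro n hn
  -- the suffix map
  set sfx : (Fin N → Bool) → (Fin (N - k n) → Bool) :=
    fun v => pre (shiftTail (I v) (k n)) (N - k n) with hsfx
  have hkey : ∀ v ∈ (Lwords a b N).filter (fun v => G v = n),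
      Pw q0 q1 v ^ (-s) = Pw q0 q1 (w n) ^ (-s) * Pw q0 q1 (sfx v) ^ (-s) := by
    intro v hv
    obtain ⟨hvL, hvG⟩ := Finset.mem_filter.1 hv
    have h1 : pre (I v) N = v := (hI v hvL).2
    have h2 : pre (I v) (k n) = w n := by
      have := (hG v hvL).2; rwa [hvG] at this
    have h3 : Pw q0 q1 v = Pw q0 q1 (w n) * Pw q0 q1 (sfx v) := by
      have e1 : Pw q0 q1 v = pp q0 q1 (I v) N := by
        conv_lhs => rw [← h1]
        exact Pw_pre hq0 hq1 (I v) N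
      have e2 : Pw q0 q1 (w n) = pp q0 q1 (I v) (k n) := by
        conv_lhs => rw [← h2]
        exact Pw_pre hq0 hq1 (I v) (k n)
      have e3 : Pw q0 q1 (sfx v) = pp q0 q1 (shiftTail (I v) (k n)) (N - k n) := by
        rw [hsfx, Pw_pre hq0 hq1]
      have hkN : k n ≤ N := hN n hn
      rw [e1, e2, e3, ← pp_add, show k n + (N - k n) = N from by omega]
    rw [h3, Real.mul_rpow (Pw_pos hq0 hq1 _).le (Pw_pos hq0 hq1 _).le]
  rw [Finset.sum_congr rfl hkey, ← Finset.mul_sum]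
  apply mul_le_mul_of_nonneg_left _ (Real.rpow_nonneg (Pw_pos hq0 hq1 _).le _)
  -- injectivity of the suffix map on the fiber
  have hinj : Set.InjOn sfx ((Lwords a b N).filter (fun v => G v = n)) := by
    intro v hv v' hv' hsame
    obtain ⟨hvL, hvG⟩ := Finset.mem_filter.1 (Finset.mem_coe.1 hv)
    obtain ⟨hvL', hvG'⟩ := Finset.mem_filter.1 (Finset.mem_coe.1 hv')
    have h1 : pre (I v) N = v := (hI v hvL).2
    have h1' : pre (I v') N = v' := (hI v' hvL').2
    have h2 : pre (I v) (k n) = w n := by have := (hG v hvL).2; rwa [hvG] at this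
    have h2' : pre (I v') (k n) = w n := by have := (hG v' hvL').2; rwa [hvG'] at this
    funext j
    have hvj : v j = I v j.1 := (congrFun h1 j).symm
    have hvj' : v' j = I v' j.1 := (congrFun h1' j).symm
    rcases lt_or_ge j.1 (k n) with hj | hj
    · have e1 : I v j.1 = w n ⟨j.1, hj⟩ := congrFun h2 ⟨j.1, hj⟩
      have e1' : I v' j.1 = w n ⟨j.1, hj⟩ := congrFun h2' ⟨j.1, hj⟩
      rw [hvj, hvj', e1, e1']
    · have hj2 : j.1 - k n < N - k n := by omega
      have hs2 := congrFun hsame ⟨j.1 - k n, hj2⟩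
      rw [hsfx] at hs2
      have hs3 : I v (k n + (j.1 - k n)) = I v' (k n + (j.1 - k n)) := hs2
      have e : k n + (j.1 - k n) = j.1 := by omega
      rw [e] at hs3
      rw [hvj, hvj', hs3]
  have himg := Finset.sum_image (s := (Lwords a b N).filter (fun v => G v = n))
    (g := sfx) (f := fun u => Pw q0 q1 u ^ (-s)) (fun v hv v' hv' h => hinj hv hv' h)
  rw [← himg]
  apply Finset.sum_le_sum_of_subset_of_nonneg
  · intro u hu
    obtain ⟨v, hv, rfl⟩ := Finset.mem_image.1 hu
    obtain ⟨hvL, -⟩ := Finset.mem_filter.1 hv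
    exact pre_mem_Lwords (Omega.shift (hI v hvL).1 (k n)) (N - k n)
  · intro u _ _
    exact Real.rpow_nonneg (Pw_pos hq0 hq1 _).le _

/-- The min-cut lower bound: any finite family of cylinders covering `Ω` has weighted sum `≥ 1`,
provided all the partition sums are `≥ 1`. -/
lemma cut_lemma (s : ℝ) (hS : ∀ N : ℕ, 1 ≤ SS a b q0 q1 s N)
    (F : Finset ℕ) (k : ℕ → ℕ) (w : ∀ n : ℕ, Fin (k n) → Bool)
    (hcov : ∀ i ∈ Omega a b, ∃ n ∈ F, pre i (k n) = w n) :
    1 ≤ ∑ n ∈ F, Pw q0 q1 (w n) ^ (-s) := by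
  classical
  have hne : F.Nonempty := by
    obtain ⟨n, hn, -⟩ := hcov _ (zero_mem_Omega (a := a) (b := b))
    exact ⟨n, hn⟩
  by_cases hzero : ∃ n ∈ F, k n = 0
  · obtain ⟨n, hnF, hkn⟩ := hzero
    have hemp : IsEmpty (Fin (k n)) := by rw [hkn]; infer_instance
    have h1 : Pw q0 q1 (w n) ^ (-s) = 1 := by
      rw [Pw, @Finset.univ_eq_empty _ _ hemp, Finset.prod_empty, Real.one_rpow]
    calc (1:ℝ) = Pw q0 q1 (w n) ^ (-s) := h1.symm
      _ ≤ ∑ n ∈ F, Pw q0 q1 (w n) ^ (-s) :=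
        Finset.single_le_sum (fun m _ => Real.rpow_nonneg (Pw_pos hq0 hq1 _).le _) hnF
  · push_neg at hzero
    have hk1 : ∀ n ∈ F, 1 ≤ k n := fun n hn => Nat.one_le_iff_ne_zero.2 (hzero n hn)
    by_contra hlt
    push_neg at hlt
    set ε := ∑ n ∈ F, Pw q0 q1 (w n) ^ (-s) with hε
    have hεpos : 0 < ε :=
      Finset.sum_pos (fun n _ => Real.rpow_pos_of_pos (Pw_pos hq0 hq1 _) _) hne
    set ℓ := F.sup k with hℓ
    have hℓ1 : 1 ≤ ℓ := by
      obtain ⟨n, hn⟩ := hne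
      exact le_trans (hk1 n hn) (Finset.le_sup hn)
    have hkℓ : ∀ n ∈ F, k n ≤ ℓ := fun n hn => Finset.le_sup hn
    set c := ε ^ ((ℓ:ℝ)⁻¹) with hc
    have hcpos : 0 < c := Real.rpow_pos_of_pos hεpos _
    have hclt : c < 1 := Real.rpow_lt_one hεpos.le hlt (by positivity)
    have hcℓ : c ^ ℓ = ε := by
      rw [hc, ← Real.rpow_natCast (ε ^ ((ℓ:ℝ)⁻¹)) ℓ, ← Real.rpow_mul hεpos.le,
        inv_mul_cancel₀ (by positivity : ((ℓ:ℝ)) ≠ 0), Real.rpow_one]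
    set B := (Finset.range ℓ).sup' (Finset.nonempty_range_iff.2 (Nat.one_le_iff_ne_zero.1 hℓ1)) (fun M => SS a b q0 q1 s M / c ^ M) with hB
    have hBpos : 0 < B := by
      have : SS a b q0 q1 s 0 / c ^ 0 ≤ B := by
        rw [hB]
        exact Finset.le_sup' (fun M => SS a b q0 q1 s M / c ^ M) (Finset.mem_range.2 (Nat.lt_of_lt_of_le Nat.zero_lt_one hℓ1))
      have h0 : 0 < SS a b q0 q1 s 0 / c ^ 0 := by
        apply div_pos (SS_pos hq0 hq1 s 0) (by positivity)
      linarith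
    have main : ∀ N : ℕ, SS a b q0 q1 s N ≤ B * c ^ N := by
      intro N
      induction N using Nat.strong_induction_on with
      | _ N ih =>
        rcases lt_or_ge N ℓ with hNℓ | hNℓ
        · have h1 : SS a b q0 q1 s N / c ^ N ≤ B := by
            rw [hB]
            exact Finset.le_sup' (fun M => SS a b q0 q1 s M / c ^ M) (Finset.mem_range.2 hNℓ)
          rw [div_le_iff₀ (by positivity)] at h1
          linarith
        · have hparse := SS_parse hq0 hq1 s F k w hcov N
            (fun n hn => le_trans (hkℓ n hn) hNℓ)
          have hsum : ∑ n ∈ F, Pw q0 q1 (w n) ^ (-s) * SS a b q0 q1 s (N - k n)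
              ≤ ∑ n ∈ F, Pw q0 q1 (w n) ^ (-s) * (B * c ^ N / ε) := by
            apply Finset.sum_le_sum
            intro n hn
            apply mul_le_mul_of_nonneg_left _ (Real.rpow_nonneg (Pw_pos hq0 hq1 _).le _)
            have hih := ih (N - k n) (by have := hk1 n hn; omega)
            have hcc : c ^ (N - k n) ≤ c ^ N / ε := by
              rw [← hcℓ, div_eq_mul_inv, ← pow_sub₀ _ hcpos.ne' hNℓ]
              apply pow_le_pow_of_le_one hcpos.le hclt.le
              have := hkℓ n hn; omega
            calc SS a b q0 q1 s (N - k n) ≤ B * c ^ (N - k n) := hih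
              _ ≤ B * (c ^ N / ε) := by
                  apply mul_le_mul_of_nonneg_left hcc hBpos.le
              _ = B * c ^ N / ε := by ring
          have hfin : ∑ n ∈ F, Pw q0 q1 (w n) ^ (-s) * (B * c ^ N / ε) = B * c ^ N := by
            rw [← Finset.sum_mul, ← hε]
            field_simp
          linarith [le_trans hparse (hsum.trans_eq hfin)]
    -- contradiction : B * c ^ N < 1 eventually
    obtain ⟨N, hN⟩ := exists_pow_lt_of_lt_one (show (0:ℝ) < 1 / B by positivity) hclt
    have h1 : B * c ^ N < 1 := by
      rw [lt_div_iff₀ hBpos] at hN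
      linarith [hN]
    linarith [hS N, main N]

end cut

variable {a b : ℕ → Bool} {q0 q1 : ℝ}
section gap
variable (hq0 : 1 < q0) (hq1 : 1 < q1)
include hq0 hq1

lemma bddAbove_piE_cyl (d : Bool) : BddAbove (piE q0 q1 '' cyl a b d) := by
  refine ⟨(min q0 q1 - 1)⁻¹, ?_⟩
  rintro x ⟨i, -, rfl⟩
  exact piE_le hq0 hq1 i

lemma bddBelow_piE_cyl (d : Bool) : BddBelow (piE q0 q1 '' cyl a b d) := by
  refine ⟨0, ?_⟩
  rintro x ⟨i, -, rfl⟩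
  exact piE_nonneg hq0 hq1 i

lemma piE_le_sSup {j : ℕ → Bool} (hj : j ∈ Omega a b) (hj0 : j 0 = false) :
    piE q0 q1 j ≤ sSup (piE q0 q1 '' cyl a b false) :=
  le_csSup (bddAbove_piE_cyl hq0 hq1 false) ⟨j, ⟨hj, hj0⟩, rfl⟩

lemma sInf_le_piE {i : ℕ → Bool} (hi : i ∈ Omega a b) (hi0 : i 0 = true) :
    sInf (piE q0 q1 '' cyl a b true) ≤ piE q0 q1 i :=
  csInf_le (bddBelow_piE_cyl hq0 hq1 true) ⟨i, ⟨hi, hi0⟩, rfl⟩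

/-- The fundamental gap estimate. -/
lemma gap_le (hi : i ∈ Omega a b) (hj : j ∈ Omega a b) {n : ℕ}
    (hag : ∀ m, m < n → i m = j m) (hin : i n = true) (hjn : j n = false) :
    (sInf (piE q0 q1 '' cyl a b true) - sSup (piE q0 q1 '' cyl a b false))
        * (pp q0 q1 i n)⁻¹ ≤ piE q0 q1 i - piE q0 q1 j := by
  rw [piE_sub_of_agree hq0 hq1 hag, mul_comm]
  apply mul_le_mul_of_nonneg_left _ (inv_pos.2 (pp_pos hq0 hq1 i n)).le
  have h1 : sInf (piE q0 q1 '' cyl a b true) ≤ piE q0 q1 (shiftTail i n) :=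
    sInf_le_piE hq0 hq1 (Omega.shift hi n) (by simpa [shiftTail] using hin)
  have h2 : piE q0 q1 (shiftTail j n) ≤ sSup (piE q0 q1 '' cyl a b false) :=
    piE_le_sSup hq0 hq1 (Omega.shift hj n) (by simpa [shiftTail] using hjn)
  linarith

end gap

/-! ### upper bound for the Hausdorff measure -/

section upper
variable (hq0 : 1 < q0) (hq1 : 1 < q1)
include hq0 hq1

lemma diam_image_cyl (N : ℕ) (w : Fin N → Bool) :
    EMetric.diam (piE q0 q1 '' (Omega a b ∩ {i | pre i N = w}))
      ≤ ENNReal.ofReal ((min q0 q1 - 1)⁻¹ * (Pw q0 q1 w)⁻¹) := by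
  apply EMetric.diam_le
  rintro x ⟨i, ⟨hiΩ, hiw⟩, rfl⟩ y ⟨j, ⟨hjΩ, hjw⟩, rfl⟩
  rw [edist_dist, Real.dist_eq]
  apply ENNReal.ofReal_le_ofReal
  have hag : ∀ m, m < N → i m = j m := by
    intro m hm
    have e1 : i m = w ⟨m, hm⟩ := congrFun hiw ⟨m, hm⟩
    have e2 : j m = w ⟨m, hm⟩ := congrFun hjw ⟨m, hm⟩
    rw [e1, e2]
  have h := abs_piE_sub_le hq0 hq1 hag
  have hPw : Pw q0 q1 w = pp q0 q1 i N := by rw [← hiw]; exact Pw_pre hq0 hq1 i N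
  rw [hPw]
  calc |piE q0 q1 i - piE q0 q1 j| ≤ (pp q0 q1 i N)⁻¹ * (min q0 q1 - 1)⁻¹ := h
    _ = (min q0 q1 - 1)⁻¹ * (pp q0 q1 i N)⁻¹ := by ring

lemma piE_image_subset_iUnion (N : ℕ) :
    piE q0 q1 '' Omega a b ⊆
      ⋃ w : ↥(Lwords a b N), piE q0 q1 '' (Omega a b ∩ {i | pre i N = w.1}) := by
  rintro x ⟨i, hi, rfl⟩
  exact Set.mem_iUnion.2 ⟨⟨pre i N, pre_mem_Lwords hi N⟩, ⟨i, ⟨hi, rfl⟩, rfl⟩⟩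

lemma tendsto_SS_zero {d PPv : ℝ} (hPP : Tendsto (fun n : ℕ => Real.log (SS a b q0 q1 d n) / n)
      atTop (𝓝 PPv)) (hneg : PPv < 0) :
    Tendsto (fun n : ℕ => SS a b q0 q1 d n) atTop (𝓝 0) := by
  have hev : ∀ᶠ n : ℕ in atTop, Real.log (SS a b q0 q1 d n) / n < PPv / 2 :=
    hPP.eventually (eventually_lt_nhds (by linarith))
  have hg : Tendsto (fun n : ℕ => Real.exp ((PPv / 2) * n)) atTop (𝓝 0) := by
    apply Real.tendsto_exp_atBot.comp
    exact Tendsto.const_mul_atTop_of_neg (by linarith) tendsto_natCast_atTop_atTop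
  apply squeeze_zero' (Eventually.of_forall fun n => (SS_pos hq0 hq1 d n).le) _ hg
  filter_upwards [hev, eventually_ge_atTop 1] with n hn hn1
  have hnR : (0:ℝ) < n := by exact_mod_cast hn1
  have h1 : Real.log (SS a b q0 q1 d n) < (PPv / 2) * n := by
    rw [div_lt_iff₀ hnR] at hn
    linarith
  calc SS a b q0 q1 d n = Real.exp (Real.log (SS a b q0 q1 d n)) :=
        (Real.exp_log (SS_pos hq0 hq1 d n)).symm
    _ ≤ Real.exp ((PPv / 2) * n) := Real.exp_le_exp.2 h1.le

lemma hausdorffMeasure_image_eq_zero {d : ℝ} (hd : 0 ≤ d)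
    (hSS : Tendsto (fun n : ℕ => SS a b q0 q1 d n) atTop (𝓝 0)) :
    μH[d] (piE q0 q1 '' Omega a b) = 0 := by
  classical
  have hm1 : (1:ℝ) < min q0 q1 := one_lt_min hq0 hq1
  set M : ℝ := (min q0 q1 - 1)⁻¹ with hM
  have hMpos : 0 < M := inv_pos.2 (by linarith)
  set r : ℕ → ℝ≥0∞ := fun N => ENNReal.ofReal (M * ((min q0 q1)⁻¹) ^ N) with hr
  have hr0 : Tendsto r atTop (𝓝 0) := by
    rw [hr, ← ENNReal.ofReal_zero]
    apply ENNReal.tendsto_ofReal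
    have : Tendsto (fun N : ℕ => ((min q0 q1)⁻¹) ^ N) atTop (𝓝 0) :=
      tendsto_pow_atTop_nhds_zero_of_lt_one (by positivity)
        (inv_lt_one_of_one_lt₀ hm1)
    simpa using this.const_mul M
  set t : ∀ N : ℕ, ↥(Lwords a b N) → Set ℝ :=
    fun N w => piE q0 q1 '' (Omega a b ∩ {i | pre i N = w.1}) with ht
  have hdiam : ∀ N : ℕ, ∀ w : ↥(Lwords a b N),
      EMetric.diam (t N w) ≤ ENNReal.ofReal (M * (Pw q0 q1 w.1)⁻¹) := by
    intro N w
    rw [ht]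
    exact diam_image_cyl hq0 hq1 N w.1
  have hle_r : ∀ N : ℕ, ∀ w : ↥(Lwords a b N),
      ENNReal.ofReal (M * (Pw q0 q1 w.1)⁻¹) ≤ r N := by
    intro N w
    apply ENNReal.ofReal_le_ofReal
    apply mul_le_mul_of_nonneg_left _ hMpos.le
    rw [inv_pow]
    apply inv_anti₀ (by positivity)
    -- (min q0 q1)^N ≤ Pw w
    have : ∃ i : ℕ → Bool, pre i N = w.1 := by
      obtain ⟨i, hi, hp⟩ := mem_Lwords.1 w.2
      exact ⟨i, hp⟩
    obtain ⟨i, hp⟩ := this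
    rw [← hp, Pw_pre hq0 hq1]
    exact min_pow_le_pp hq0 hq1 i N
  have hcover : ∀ᶠ N : ℕ in atTop, piE q0 q1 '' Omega a b ⊆ ⋃ w, t N w :=
    Eventually.of_forall fun N => piE_image_subset_iUnion hq0 hq1 N
  have hmain := MeasureTheory.Measure.hausdorffMeasure_le_liminf_sum d (piE q0 q1 '' Omega a b) r hr0 t
    (Eventually.of_forall fun N w => le_trans (hdiam N w) (hle_r N w)) hcover
  have hbound : ∀ N : ℕ, (∑ w : ↥(Lwords a b N), EMetric.diam (t N w) ^ d)
      ≤ ENNReal.ofReal (M ^ d * SS a b q0 q1 d N) := by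
    intro N
    have h1 : ∀ w : ↥(Lwords a b N), EMetric.diam (t N w) ^ d
        ≤ ENNReal.ofReal (M ^ d * Pw q0 q1 w.1 ^ (-d)) := by
      intro w
      have hPwpos : 0 < Pw q0 q1 (w.1) := Pw_pos hq0 hq1 _
      have h2 : EMetric.diam (t N w) ^ d ≤ (ENNReal.ofReal (M * (Pw q0 q1 w.1)⁻¹)) ^ d :=
        ENNReal.rpow_le_rpow (hdiam N w) hd
      rw [ENNReal.ofReal_rpow_of_pos (by positivity)] at h2
      have h3 : (M * (Pw q0 q1 w.1)⁻¹) ^ d = M ^ d * Pw q0 q1 w.1 ^ (-d) := by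
        rw [Real.mul_rpow hMpos.le (by positivity), Real.inv_rpow hPwpos.le,
          ← Real.rpow_neg hPwpos.le]
      rwa [h3] at h2
    calc (∑ w : ↥(Lwords a b N), EMetric.diam (t N w) ^ d)
        ≤ ∑ w : ↥(Lwords a b N), ENNReal.ofReal (M ^ d * Pw q0 q1 w.1 ^ (-d)) :=
          Finset.sum_le_sum fun w _ => h1 w
      _ = ∑ w ∈ Lwords a b N, ENNReal.ofReal (M ^ d * Pw q0 q1 w ^ (-d)) := by
          rw [← Finset.sum_coe_sort (Lwords a b N) (fun w => ENNReal.ofReal (M ^ d * Pw q0 q1 w ^ (-d)))]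
      _ = ENNReal.ofReal (∑ w ∈ Lwords a b N, M ^ d * Pw q0 q1 w ^ (-d)) := by
          rw [ENNReal.ofReal_sum_of_nonneg]
          intro w _
          have := Pw_pos hq0 hq1 (q0 := q0) (q1 := q1) w
          positivity
      _ = ENNReal.ofReal (M ^ d * SS a b q0 q1 d N) := by
          rw [SS, Finset.mul_sum]
  have hlim : Tendsto (fun N : ℕ => ENNReal.ofReal (M ^ d * SS a b q0 q1 d N)) atTop (𝓝 0) := by
    rw [← ENNReal.ofReal_zero]
    apply ENNReal.tendsto_ofReal
    simpa using hSS.const_mul (M ^ d)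
  have : liminf (fun N : ℕ => ∑ w : ↥(Lwords a b N), EMetric.diam (t N w) ^ d) atTop
      ≤ liminf (fun N : ℕ => ENNReal.ofReal (M ^ d * SS a b q0 q1 d N)) atTop :=
    liminf_le_liminf (Eventually.of_forall hbound)
  rw [hlim.liminf_eq] at this
  exact le_antisymm (le_trans hmain this) zero_le

end upper

variable {a b : ℕ → Bool} {q0 q1 : ℝ}
section lower

/-- The Frostman-type lower bound for the Hausdorff measure of `piE '' Omega`. -/
lemma hausdorff_lower (hq0 : 1 < q0) (hq1 : 1 < q1) {s : ℝ} (hs : 0 < s)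
    (hδ : 0 < sInf (piE q0 q1 '' cyl a b true) - sSup (piE q0 q1 '' cyl a b false))
    (hS : ∀ N : ℕ, 1 ≤ SS a b q0 q1 s N) :
    ENNReal.ofReal ((sInf (piE q0 q1 '' cyl a b true)
        - sSup (piE q0 q1 '' cyl a b false)) ^ s)
      ≤ μH[s] (piE q0 q1 '' Omega a b) := by
  classical
  set δ : ℝ := sInf (piE q0 q1 '' cyl a b true) - sSup (piE q0 q1 '' cyl a b false) with hδdef
  rw [MeasureTheory.Measure.hausdorffMeasure_apply]
  refine le_iSup₂_of_le 1 one_pos (le_iInf fun t => le_iInf fun hcov => le_iInf fun _ => ?_)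
  apply ENNReal.le_of_forall_pos_le_add
  intro ε hε _
  have hη : (0:ℝ) < (ε:ℝ) := by exact_mod_cast hε
  set η : ℝ := (ε:ℝ) with hηdef
  -- choice of a word for each element of the cover
  have hchoice : ∀ n : ℕ, ∃ (kk : ℕ) (ww : Fin kk → Bool),
      (∀ i, i ∈ Omega a b → piE q0 q1 i ∈ t n → pre i kk = ww) ∧
      ENNReal.ofReal (δ ^ s * Pw q0 q1 ww ^ (-s))
        ≤ (⨆ _ : (t n).Nonempty, EMetric.diam (t n) ^ s)
          + ENNReal.ofReal (η * (2⁻¹:ℝ) ^ (n+1)) := by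
    intro n
    by_cases hsplit : ∃ m : ℕ, ∃ i, (i ∈ Omega a b ∧ piE q0 q1 i ∈ t n) ∧
        ∃ j, (j ∈ Omega a b ∧ piE q0 q1 j ∈ t n) ∧ i m ≠ j m
    · -- some two elements split at some coordinate; take the first splitting coordinate
      set kk := Nat.find hsplit with hkk
      obtain ⟨i0, ⟨hi0Ω, hi0t⟩, j0, ⟨hj0Ω, hj0t⟩, hij⟩ := Nat.find_spec hsplit
      have hmin : ∀ m, m < kk → ∀ i, (i ∈ Omega a b ∧ piE q0 q1 i ∈ t n) →
          ∀ j, (j ∈ Omega a b ∧ piE q0 q1 j ∈ t n) → i m = j m := by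
        intro m hm i hi j hj
        by_contra hne
        exact Nat.find_min hsplit hm ⟨i, hi, j, hj, hne⟩
      refine ⟨kk, pre i0 kk, ?_, ?_⟩
      · intro i hiΩ hit
        funext m
        exact hmin m.1 m.2 i ⟨hiΩ, hit⟩ i0 ⟨hi0Ω, hi0t⟩
      · -- the gap bound
        -- arrange the pair so that the first has digit true at kk
        obtain ⟨i1, j1, hi1, hj1, hag, hi1k, hj1k, hppre⟩ :
            ∃ i1 j1, (i1 ∈ Omega a b ∧ piE q0 q1 i1 ∈ t n)
              ∧ (j1 ∈ Omega a b ∧ piE q0 q1 j1 ∈ t n)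
              ∧ (∀ m, m < kk → i1 m = j1 m) ∧ i1 kk = true ∧ j1 kk = false
              ∧ pre i1 kk = pre i0 kk := by
          have hagree : ∀ m, m < kk → i0 m = j0 m := fun m hm =>
            hmin m hm i0 ⟨hi0Ω, hi0t⟩ j0 ⟨hj0Ω, hj0t⟩
          cases hik : i0 kk
          · have hjk : j0 kk = true := by
              cases hjk : j0 kk
              · exact absurd (by rw [hik, hjk]) hij
              · rfl
            refine ⟨j0, i0, ⟨hj0Ω, hj0t⟩, ⟨hi0Ω, hi0t⟩,
              fun m hm => (hagree m hm).symm, hjk, hik, ?_⟩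
            funext m
            exact (hagree m.1 m.2).symm
          · have hjk : j0 kk = false := by
              cases hjk : j0 kk
              · rfl
              · exact absurd (by rw [hik, hjk]) hij
            exact ⟨i0, j0, ⟨hi0Ω, hi0t⟩, ⟨hj0Ω, hj0t⟩, hagree, hik, hjk, rfl⟩
        have hgap := gap_le hq0 hq1 hi1.1 hj1.1 hag hi1k hj1k
        have hppe : pp q0 q1 i1 kk = Pw q0 q1 (pre i0 kk) := by
          rw [← hppre, Pw_pre hq0 hq1]
        have hne : (t n).Nonempty := ⟨piE q0 q1 i1, hi1.2⟩
        rw [iSup_pos hne]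
        have hPwpos : 0 < Pw q0 q1 (pre i0 kk) := Pw_pos hq0 hq1 _
        have hd1 : ENNReal.ofReal (δ * (Pw q0 q1 (pre i0 kk))⁻¹)
            ≤ edist (piE q0 q1 i1) (piE q0 q1 j1) := by
          rw [edist_dist, Real.dist_eq]
          apply ENNReal.ofReal_le_ofReal
          have h2 : δ * (Pw q0 q1 (pre i0 kk))⁻¹ ≤ piE q0 q1 i1 - piE q0 q1 j1 := by
            rw [← hppe] at *
            exact le_trans (le_of_eq rfl) (by rw [hδdef] at *; exact hgap)
          exact le_trans h2 (le_abs_self _)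
        have hd2 : edist (piE q0 q1 i1) (piE q0 q1 j1) ≤ EMetric.diam (t n) :=
          EMetric.edist_le_diam_of_mem hi1.2 hj1.2
        have hd3 : ENNReal.ofReal (δ * (Pw q0 q1 (pre i0 kk))⁻¹) ^ s
            ≤ EMetric.diam (t n) ^ s :=
          ENNReal.rpow_le_rpow (le_trans hd1 hd2) hs.le
        rw [ENNReal.ofReal_rpow_of_pos (by positivity)] at hd3
        have he : (δ * (Pw q0 q1 (pre i0 kk))⁻¹) ^ s
            = δ ^ s * Pw q0 q1 (pre i0 kk) ^ (-s) := by
          rw [Real.mul_rpow hδ.le (by positivity), Real.inv_rpow hPwpos.le,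
            ← Real.rpow_neg hPwpos.le]
        rw [he] at hd3
        exact le_trans hd3 le_self_add
    · -- no splitting: at most one point; pick a deep cylinder
      push_neg at hsplit
      have hρ : (min q0 q1) ^ (-s) < 1 :=
        Real.rpow_lt_one_of_one_lt_of_neg (one_lt_min hq0 hq1) (by linarith)
      have hρ0 : (0:ℝ) < (min q0 q1) ^ (-s) :=
        Real.rpow_pos_of_pos (by have := one_lt_min hq0 hq1; linarith) _
      have htarget : (0:ℝ) < (η * (2⁻¹:ℝ) ^ (n+1)) / δ ^ s := by positivity
      obtain ⟨kk, hkk⟩ := exists_pow_lt_of_lt_one htarget hρ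
      -- a witness sequence
      by_cases hE : ∃ i, i ∈ Omega a b ∧ piE q0 q1 i ∈ t n
      case pos =>
        obtain ⟨i0, hi0⟩ := hE
        refine ⟨kk, pre i0 kk, ?_, ?_⟩
        · intro i hiΩ hit
          funext m
          exact hsplit m.1 i ⟨hiΩ, hit⟩ i0 hi0
        · have h1 : Pw q0 q1 (pre i0 kk) ^ (-s) ≤ ((min q0 q1) ^ kk) ^ (-s) :=
            Real.rpow_le_rpow_of_nonpos (by positivity) (min_pow_le_Pw hq0 hq1 _)
              (by linarith)
          have h2 : ((min q0 q1 : ℝ) ^ kk) ^ (-s) = ((min q0 q1) ^ (-s)) ^ kk := by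
            rw [← Real.rpow_natCast (min q0 q1) kk, ← Real.rpow_mul (by positivity),
              ← Real.rpow_natCast ((min q0 q1) ^ (-s)) kk, ← Real.rpow_mul (by positivity)]
            ring_nf
          have h3 : δ ^ s * Pw q0 q1 (pre i0 kk) ^ (-s) ≤ η * (2⁻¹:ℝ) ^ (n+1) := by
            have h4 : Pw q0 q1 (pre i0 kk) ^ (-s) < (η * (2⁻¹:ℝ) ^ (n+1)) / δ ^ s := by
              rw [h2] at h1
              exact lt_of_le_of_lt h1 hkk
            have hδs : (0:ℝ) < δ ^ s := Real.rpow_pos_of_pos hδ _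
            rw [lt_div_iff₀ hδs] at h4
            nlinarith
          calc ENNReal.ofReal (δ ^ s * Pw q0 q1 (pre i0 kk) ^ (-s))
              ≤ ENNReal.ofReal (η * (2⁻¹:ℝ) ^ (n+1)) := ENNReal.ofReal_le_ofReal h3
            _ ≤ _ := le_add_self
      case neg =>
        refine ⟨kk, pre (fun _ => false) kk, ?_, ?_⟩
        · intro i hiΩ hit
          exact absurd ⟨i, hiΩ, hit⟩ hE
        · have h1 : Pw q0 q1 (pre (fun _ => false) kk) ^ (-s) ≤ ((min q0 q1) ^ kk) ^ (-s) :=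
            Real.rpow_le_rpow_of_nonpos (by positivity) (min_pow_le_Pw hq0 hq1 _)
              (by linarith)
          have h2 : ((min q0 q1 : ℝ) ^ kk) ^ (-s) = ((min q0 q1) ^ (-s)) ^ kk := by
            rw [← Real.rpow_natCast (min q0 q1) kk, ← Real.rpow_mul (by positivity),
              ← Real.rpow_natCast ((min q0 q1) ^ (-s)) kk, ← Real.rpow_mul (by positivity)]
            ring_nf
          have h3 : δ ^ s * Pw q0 q1 (pre (fun _ => false) kk) ^ (-s) ≤ η * (2⁻¹:ℝ) ^ (n+1) := by
            have h4 : Pw q0 q1 (pre (fun _ => false) kk) ^ (-s) < (η * (2⁻¹:ℝ) ^ (n+1)) / δ ^ s := by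
              rw [h2] at h1
              exact lt_of_le_of_lt h1 hkk
            have hδs : (0:ℝ) < δ ^ s := Real.rpow_pos_of_pos hδ _
            rw [lt_div_iff₀ hδs] at h4
            nlinarith
          calc ENNReal.ofReal (δ ^ s * Pw q0 q1 (pre (fun _ => false) kk) ^ (-s))
              ≤ ENNReal.ofReal (η * (2⁻¹:ℝ) ^ (n+1)) := ENNReal.ofReal_le_ofReal h3
            _ ≤ _ := le_add_self
  choose k w hpref hbd using hchoice
  -- compactness: finitely many cylinders suffice
  have hΩsub : Omega a b ⊆ ⋃ n : ℕ, {i : ℕ → Bool | pre i (k n) = w n} := by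
    intro i hi
    have : piE q0 q1 i ∈ ⋃ n, t n := hcov ⟨i, hi, rfl⟩
    obtain ⟨n, hn⟩ := Set.mem_iUnion.1 this
    exact Set.mem_iUnion.2 ⟨n, hpref n i hi hn⟩
  obtain ⟨F, hF⟩ := (isCompact_Omega a b).elim_finite_subcover _
    (fun n => isOpen_preCyl (k n) (w n)) hΩsub
  have hcut : 1 ≤ ∑ n ∈ F, Pw q0 q1 (w n) ^ (-s) := by
    apply cut_lemma hq0 hq1 s hS F k w
    intro i hi
    obtain ⟨n, hn, hin⟩ := Set.mem_iUnion₂.1 (hF hi)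
    exact ⟨n, hn, hin⟩
  -- final chain
  have hδs : (0:ℝ) ≤ δ ^ s := (Real.rpow_pos_of_pos hδ _).le
  have hgeom : ∑ n ∈ F, ENNReal.ofReal (η * (2⁻¹:ℝ) ^ (n+1)) ≤ ENNReal.ofReal η := by
    have hsummable : Summable (fun n : ℕ => η * (2⁻¹:ℝ) ^ (n+1)) := by
      apply Summable.mul_left
      have hg := summable_geometric_of_lt_one (by norm_num : (0:ℝ) ≤ 2⁻¹) (by norm_num)
      simpa [pow_succ] using hg.mul_right (2⁻¹:ℝ)
    have htsum : ∑' n : ℕ, η * (2⁻¹:ℝ) ^ (n+1) = η := by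
      rw [tsum_mul_left]
      have h2 : ∑' n : ℕ, (2⁻¹:ℝ) ^ (n+1) = 1 := by
        have he : (fun n : ℕ => (2⁻¹:ℝ) ^ (n+1)) = fun n : ℕ => (2⁻¹:ℝ) ^ n * 2⁻¹ :=
          funext fun n => pow_succ _ _
        rw [he, tsum_mul_right, tsum_geometric_of_lt_one (by norm_num) (by norm_num)]
        norm_num
      rw [h2, mul_one]
    calc ∑ n ∈ F, ENNReal.ofReal (η * (2⁻¹:ℝ) ^ (n+1))
        ≤ ∑' n : ℕ, ENNReal.ofReal (η * (2⁻¹:ℝ) ^ (n+1)) := ENNReal.sum_le_tsum F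
      _ = ENNReal.ofReal (∑' n : ℕ, η * (2⁻¹:ℝ) ^ (n+1)) :=
          (ENNReal.ofReal_tsum_of_nonneg (fun n => by positivity) hsummable).symm
      _ = ENNReal.ofReal η := by rw [htsum]
  calc ENNReal.ofReal (δ ^ s) = ENNReal.ofReal (δ ^ s * 1) := by rw [mul_one]
    _ ≤ ENNReal.ofReal (δ ^ s * ∑ n ∈ F, Pw q0 q1 (w n) ^ (-s)) :=
        ENNReal.ofReal_le_ofReal (mul_le_mul_of_nonneg_left hcut hδs)
    _ = ENNReal.ofReal (∑ n ∈ F, δ ^ s * Pw q0 q1 (w n) ^ (-s)) := by rw [Finset.mul_sum]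
    _ = ∑ n ∈ F, ENNReal.ofReal (δ ^ s * Pw q0 q1 (w n) ^ (-s)) := by
        rw [ENNReal.ofReal_sum_of_nonneg]
        intro n _
        have := Pw_pos hq0 hq1 (q0 := q0) (q1 := q1) (w n)
        positivity
    _ ≤ ∑ n ∈ F, ((⨆ _ : (t n).Nonempty, EMetric.diam (t n) ^ s)
          + ENNReal.ofReal (η * (2⁻¹:ℝ) ^ (n+1))) := Finset.sum_le_sum fun n _ => hbd n
    _ = (∑ n ∈ F, ⨆ _ : (t n).Nonempty, EMetric.diam (t n) ^ s)
          + ∑ n ∈ F, ENNReal.ofReal (η * (2⁻¹:ℝ) ^ (n+1)) := Finset.sum_add_distrib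
    _ ≤ (∑' n : ℕ, ⨆ _ : (t n).Nonempty, EMetric.diam (t n) ^ s) + ↑ε := by
        apply add_le_add (ENNReal.sum_le_tsum F)
        rw [hηdef] at hgeom
        exact le_trans hgeom (by rw [ENNReal.ofReal_coe_nnreal])

end lower

end S11

/-- Lemma 2.1. -/
theorem stmt11 (a b : ℕ → Bool) (q0 q1 : ℝ) (ha : a 0 = false) (hb : b 0 = true)
    (hq0 : 1 < q0) (hq1 : 1 < q1)
    (hsep : sSup (piE q0 q1 '' cyl a b false) < sInf (piE q0 q1 '' cyl a b true)) :
    (∃! s : ℝ, 0 ≤ s ∧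
      Filter.Tendsto
        (fun n : ℕ =>
          Real.log (∑ w ∈ Lwords a b n, (∏ j : Fin n, qb q0 q1 (w j)) ^ (-s)) / n)
        Filter.atTop (nhds 0)) ∧
    (∀ s : ℝ, 0 ≤ s →
      Filter.Tendsto
        (fun n : ℕ =>
          Real.log (∑ w ∈ Lwords a b n, (∏ j : Fin n, qb q0 q1 (w j)) ^ (-s)) / n)
        Filter.atTop (nhds 0) →
      dimH (piE q0 q1 '' Omega a b) = ENNReal.ofReal s) ∧
    (entropy a b = 0 → dimH (piE q0 q1 '' Omega a b) = 0) := by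
  classical
  have hδ : 0 < sInf (piE q0 q1 '' cyl a b true) - sSup (piE q0 q1 '' cyl a b false) :=
    sub_pos.2 hsep
  have hiff : ∀ s : ℝ, 0 ≤ s → (Filter.Tendsto (fun n : ℕ =>
      Real.log (∑ w ∈ Lwords a b n, (∏ j : Fin n, qb q0 q1 (w j)) ^ (-s)) / n)
      Filter.atTop (nhds 0) ↔ S11.PP a b q0 q1 s = 0) := by
    intro s hs
    have hfun : (fun n : ℕ =>
        Real.log (∑ w ∈ Lwords a b n, (∏ j : Fin n, qb q0 q1 (w j)) ^ (-s)) / n)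
        = fun n : ℕ => S11.logS a b q0 q1 s n / n := rfl
    rw [hfun]
    constructor
    · intro h
      exact (tendsto_nhds_unique (S11.tendsto_logS_div hq0 hq1 s hs) h).symm ▸ rfl
    · intro h
      have h2 := S11.tendsto_logS_div hq0 hq1 s hs (a := a) (b := b)
      rwa [h] at h2
  have hB : ∀ s : ℝ, 0 ≤ s → S11.PP a b q0 q1 s = 0 →
      dimH (piE q0 q1 '' Omega a b) = ENNReal.ofReal s := by
    intro s hs hroot
    apply le_antisymm
    · -- upper bound
      apply dimH_le
      intro d' hd'
      by_contra hlt
      push_neg at hlt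
      have hd'R : s < (d' : ℝ) := by
        rw [← ENNReal.ofReal_coe_nnreal] at hlt
        exact (ENNReal.ofReal_lt_ofReal_iff_of_nonneg hs).1 hlt
      have hPPd : S11.PP a b q0 q1 (d' : ℝ) < 0 := by
        have h1 := S11.PP_le_PP_sub hq0 hq1 s (d' : ℝ) hs hd'R.le (a := a) (b := b)
        have hlog : 0 < Real.log (min q0 q1) := Real.log_pos (S11.one_lt_min hq0 hq1)
        nlinarith
      have hSS0 : Filter.Tendsto (fun n : ℕ => S11.SS a b q0 q1 (d' : ℝ) n)
          Filter.atTop (nhds 0) :=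
        S11.tendsto_SS_zero hq0 hq1
          (S11.tendsto_logS_div hq0 hq1 (d' : ℝ) d'.coe_nonneg) hPPd
      have hμ := S11.hausdorffMeasure_image_eq_zero hq0 hq1 d'.coe_nonneg hSS0
      rw [hμ] at hd'
      exact ENNReal.zero_ne_top hd'
    · -- lower bound
      rcases eq_or_lt_of_le hs with hs0 | hs0
      · rw [← hs0, ENNReal.ofReal_zero]
        exact zero_le
      · have hS : ∀ N : ℕ, 1 ≤ S11.SS a b q0 q1 s N := by
          intro N
          rcases Nat.eq_zero_or_pos N with rfl | hN
          · rw [S11.SS_zero' hq0 hq1]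
          · have h1 := S11.PP_le_div hq0 hq1 s hs
              (Nat.pos_iff_ne_zero.1 hN) (a := a) (b := b)
            rw [hroot] at h1
            have hNR : (0:ℝ) < N := by exact_mod_cast hN
            have h2 : 0 ≤ S11.logS a b q0 q1 s N := by
              by_contra hc
              push_neg at hc
              have : S11.logS a b q0 q1 s N / N < 0 := div_neg_of_neg_of_pos hc hNR
              linarith
            by_contra hc
            push_neg at hc
            have h3 : Real.log (S11.SS a b q0 q1 s N) < 0 :=
              Real.log_neg (S11.SS_pos hq0 hq1 s N) hc
            have h4 : S11.logS a b q0 q1 s N = Real.log (S11.SS a b q0 q1 s N) := rfl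
            linarith [h4 ▸ h2]
        have hlow := S11.hausdorff_lower hq0 hq1 hs0 hδ hS
        have hne : μH[s] (piE q0 q1 '' Omega a b) ≠ 0 := by
          intro h0
          rw [h0, le_zero_iff, ENNReal.ofReal_eq_zero] at hlow
          have : (0:ℝ) < (sInf (piE q0 q1 '' cyl a b true)
              - sSup (piE q0 q1 '' cyl a b false)) ^ s := Real.rpow_pos_of_pos hδ s
          linarith
        have hne' : μH[(s.toNNReal : ℝ)] (piE q0 q1 '' Omega a b) ≠ 0 := by
          rwa [Real.coe_toNNReal s hs]
        have hle := le_dimH_of_hausdorffMeasure_ne_zero hne'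
        have : (s.toNNReal : ℝ≥0∞) = ENNReal.ofReal s := rfl
        rwa [this] at hle
  obtain ⟨sstar, hsstar0, hsroot⟩ := S11.exists_root hq0 hq1 (a := a) (b := b)
  refine ⟨⟨sstar, ⟨hsstar0, (hiff sstar hsstar0).2 hsroot⟩, ?_⟩, ?_, ?_⟩
  · rintro y ⟨hy0, hytend⟩
    have hyroot := (hiff y hy0).1 hytend
    rcases lt_trichotomy y sstar with h | h | h
    · have h2 := S11.PP_strictAnti hq0 hq1 hy0 h (a := a) (b := b)
      rw [hyroot, hsroot] at h2
      linarith
    · exact h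
    · have h2 := S11.PP_strictAnti hq0 hq1 hsstar0 h (a := a) (b := b)
      rw [hyroot, hsroot] at h2
      linarith
  · intro s hs0 htend
    exact hB s hs0 ((hiff s hs0).1 htend)
  · intro hent
    have hPP0 : S11.PP a b q0 q1 0 = 0 := by
      have htd := S11.tendsto_logS_div hq0 hq1 0 le_rfl (a := a) (b := b)
      have hfun0 : (fun n : ℕ => S11.logS a b q0 q1 0 n / n)
          = fun n : ℕ => Real.log ((Lwords a b n).card) / n := by
        funext n
        congr 1
        rw [show S11.logS a b q0 q1 0 n = Real.log (S11.SS a b q0 q1 0 n) from rfl,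
          S11.SS_zero_eq_card hq0 hq1]
      rw [hfun0] at htd
      have hls := htd.limsup_eq
      have hent' : entropy a b
          = Filter.limsup (fun n : ℕ => Real.log ((Lwords a b n).card) / n) Filter.atTop := rfl
      rw [hent', hls] at hent
      exact hent
    have h0 := hB 0 le_rfl hPP0
    rwa [ENNReal.ofReal_zero] at h0
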